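/- Suppose θ : [0,T]×ℝ^r×ℝ^d → ℝ is continuously differentiable in t and q and twice continuously differentiable in S, satisfies θ(T,q,S) = −qᵀΓq, and for all (t,q,S) ∈ [0,T)×ℝ^r×ℝ^d satisfies 0 = ∂ₜθ + (S̄−S)ᵀRᵀ(𝒥ᵀq + ∇_Sθ) + ½Tr(Σ·D²_{SS}θ) − (ρ/2)(𝒥ᵀq + ∇_Sθ)ᵀΣ(𝒥ᵀq + ∇_Sθ) + sup_{v∈ℝ^r}{ vᵀ∇_qθ − vᵀηv } + Σ_{i=1}^r Σ_{n=1}^N ∫₀^∞ z·H^{i,n,b}(z, (θ(t,q,S) − θ(t,q+z·eⁱ,S))/z) ψ^{i,n,b}(dz) + Σ_{i=1}^r Σ_{n=1}^N ∫₀^∞ z·H^{i,n,a}(z, (θ(t,q,S) − θ(t,q−z·eⁱ,S))/z) ψ^{i,n,a}(dz), where eⁱ is the i-th standard basis vector of ℝ^r; assume all the displayed integrals below are also finite. Then w(t,x,q,S) := −exp(−ρ(x + qᵀ𝒥S + θ(t,q,S))) satisfies, for all (t,x,q,S) ∈ [0,T)×ℝ×ℝ^r×ℝ^d, 0 = ∂ₜw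 + (S̄−S)ᵀRᵀ∇_Sw + ½Tr(Σ·D²_{SS}w) + sup_{v∈ℝ^r}{ vᵀ∇_qw − (vᵀ𝒥S + vᵀηv)·∂ₓw } + Σ_{i=1}^r Σ_{n=1}^N ∫₀^∞ sup_{δ∈ℝ} Λ^{i,n,b}(δ)·( w(t, x − z(Sⁱ − δ), q + z·eⁱ, S) − w(t,x,q,S) ) ψ^{i,n,b}(dz) + Σ_{i=1}^r Σ_{n=1}^N ∫₀^∞ sup_{δ∈ℝ} Λ^{i,n,a}(δ)·( w(t, x + z(Sⁱ + δ), q − z·eⁱ, S) − w(t,x,q,S) ) ψ^{i,n,a}(dz), with terminal condition w(T,x,q,S) = −exp(−ρ(x + qᵀ𝒥S − qᵀΓq)). -/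

import Mathlib

open Matrix Set MeasureTheory

noncomputable section

variable {r dd : ℕ}

/-- The market-making Hamiltonian `H(z,p) = sup_δ (Λ(δ)/(ρz))(1 − e^{−ρz(δ−p)})`. -/
def Ham (ρ : ℝ) (Λ : ℝ → ℝ) (z p : ℝ) : ℝ :=
  sSup (Set.range fun δ : ℝ => Λ δ / (ρ * z) * (1 - Real.exp (-(ρ * z * (δ - p)))))

/-- Time partial derivative of `θ(t,q,S)` along `[0,T]`. -/
def ptTheta (T : ℝ) (θ : ℝ → (Fin r → ℝ) → (Fin dd → ℝ) → ℝ)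
    (t : ℝ) (q : Fin r → ℝ) (S : Fin dd → ℝ) : ℝ :=
  derivWithin (fun τ => θ τ q S) (Icc 0 T) t

/-- Gradient of `θ(t,q,S)` in `q`. -/
def gradQTheta (θ : ℝ → (Fin r → ℝ) → (Fin dd → ℝ) → ℝ)
    (t : ℝ) (q : Fin r → ℝ) (S : Fin dd → ℝ) : Fin r → ℝ :=
  fun i => deriv (fun s => θ t (Function.update q i s) S) (q i)

/-- Gradient of `θ(t,q,S)` in `S`. -/
def gradSTheta (θ : ℝ → (Fin r → ℝ) → (Fin dd → ℝ) → ℝ)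
    (t : ℝ) (q : Fin r → ℝ) (S : Fin dd → ℝ) : Fin dd → ℝ :=
  fun j => deriv (fun s => θ t q (Function.update S j s)) (S j)

/-- Hessian of `θ(t,q,S)` in `S`. -/
def hessSTheta (θ : ℝ → (Fin r → ℝ) → (Fin dd → ℝ) → ℝ)
    (t : ℝ) (q : Fin r → ℝ) (S : Fin dd → ℝ) : Matrix (Fin dd) (Fin dd) ℝ :=
  fun i j => deriv (fun s => gradSTheta θ t q (Function.update S j s) i) (S j)

/-- Time partial derivative of `w(t,x,q,S)` along `[0,T]`. -/
def ptW (T : ℝ) (w : ℝ → ℝ → (Fin r → ℝ) → (Fin dd → ℝ) → ℝ)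
    (t x : ℝ) (q : Fin r → ℝ) (S : Fin dd → ℝ) : ℝ :=
  derivWithin (fun τ => w τ x q S) (Icc 0 T) t

/-- Partial derivative of `w(t,x,q,S)` in the cash variable `x`. -/
def pxW (w : ℝ → ℝ → (Fin r → ℝ) → (Fin dd → ℝ) → ℝ)
    (t x : ℝ) (q : Fin r → ℝ) (S : Fin dd → ℝ) : ℝ :=
  deriv (fun ξ => w t ξ q S) x

/-- Gradient of `w(t,x,q,S)` in `q`. -/
def gradQW (w : ℝ → ℝ → (Fin r → ℝ) → (Fin dd → ℝ) → ℝ)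
    (t x : ℝ) (q : Fin r → ℝ) (S : Fin dd → ℝ) : Fin r → ℝ :=
  fun i => deriv (fun s => w t x (Function.update q i s) S) (q i)

/-- Gradient of `w(t,x,q,S)` in `S`. -/
def gradSW (w : ℝ → ℝ → (Fin r → ℝ) → (Fin dd → ℝ) → ℝ)
    (t x : ℝ) (q : Fin r → ℝ) (S : Fin dd → ℝ) : Fin dd → ℝ :=
  fun j => deriv (fun s => w t x q (Function.update S j s)) (S j)

/-- Hessian of `w(t,x,q,S)` in `S`. -/
def hessSW (w : ℝ → ℝ → (Fin r → ℝ) → (Fin dd → ℝ) → ℝ)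
    (t x : ℝ) (q : Fin r → ℝ) (S : Fin dd → ℝ) : Matrix (Fin dd) (Fin dd) ℝ :=
  fun i j => deriv (fun s => gradSW w t x q (Function.update S j s) i) (S j)


section MMAux

theorem MM.hasDerivAt_comp_update {m : ℕ} {f : (Fin m → ℝ) → ℝ} {S : Fin m → ℝ} {i : Fin m}
    (hf : DifferentiableAt ℝ f S) :
    HasDerivAt (fun s => f (Function.update S i s)) (fderiv ℝ f S (Pi.single i 1)) (S i) :=
  hf.hasFDerivAt.comp_hasDerivAt_of_eq (S i) (hasDerivAt_update S i (S i))
    (by rw [Function.update_eq_self])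

theorem MM.deriv_comp_update {m : ℕ} {f : (Fin m → ℝ) → ℝ} {S : Fin m → ℝ} {i : Fin m}
    (hf : DifferentiableAt ℝ f S) :
    deriv (fun s => f (Function.update S i s)) (S i) = fderiv ℝ f S (Pi.single i 1) :=
  (MM.hasDerivAt_comp_update hf).deriv

theorem MM.update_dotProduct {m : ℕ} (q v : Fin m → ℝ) (i : Fin m) (s : ℝ) :
    Function.update q i s ⬝ᵥ v = q ⬝ᵥ v + (s - q i) * v i := by
  have h : Function.update q i s = q + (s - q i) • (Pi.single i 1 : Fin m → ℝ) := by
    funext j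
    by_cases hj : j = i
    · subst hj; simp
    · simp [Function.update_of_ne hj, Pi.single_eq_of_ne hj]
  rw [h, add_dotProduct, smul_dotProduct, single_dotProduct]
  simp [smul_eq_mul]

theorem MM.hasDerivAt_update_dotProduct {m : ℕ} (q v : Fin m → ℝ) (i : Fin m) :
    HasDerivAt (fun s => Function.update q i s ⬝ᵥ v) (v i) (q i) := by
  simp only [MM.update_dotProduct]
  simpa using (((hasDerivAt_id (q i)).sub_const (q i)).mul_const (v i)).const_add (q ⬝ᵥ v)

theorem MM.differentiable_gradS {m : ℕ} {f : (Fin m → ℝ) → ℝ} (hf : ContDiff ℝ 2 f) (i : Fin m) :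
    Differentiable ℝ (fun S : Fin m → ℝ => deriv (fun s => f (Function.update S i s)) (S i)) := by
  have hfd : Differentiable ℝ f := hf.differentiable (by norm_num)
  have heq : (fun S : Fin m → ℝ => deriv (fun s => f (Function.update S i s)) (S i))
      = fun S => fderiv ℝ f S (Pi.single i 1) :=
    funext fun S => MM.deriv_comp_update (hfd S)
  rw [heq]
  have h1 : ContDiff ℝ 1 (fderiv ℝ f) := hf.fderiv_right (by norm_num)
  exact fun S => ((h1.differentiable (by norm_num)) S).clm_apply (differentiableAt_const _)

theorem MM.sSup_range_mul {ι : Type*} [Nonempty ι] {c : ℝ} (hc : 0 ≤ c) (f : ι → ℝ) :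
    sSup (Set.range fun i => c * f i) = c * sSup (Set.range f) :=
  (Real.mul_iSup_of_nonneg hc f).symm

theorem MM.hasDerivAt_negexp {ρ : ℝ} {u : ℝ → ℝ} {u' x0 : ℝ} (hu : HasDerivAt u u' x0) :
    HasDerivAt (fun s => -Real.exp (-(ρ * u s))) (ρ * Real.exp (-(ρ * u x0)) * u') x0 := by
  have h : HasDerivAt (fun s => -Real.exp (-(ρ * u s))) (-(Real.exp (-(ρ * u x0)) * -(ρ * u'))) x0 :=
    (((hu.const_mul ρ).neg).exp).neg
  convert h using 1
  ring

theorem MM.sup_jump {ρ z E c : ℝ} (θ0 θp : ℝ) (hρ : 0 < ρ) (hz : 0 < z)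
    (hE : E = Real.exp (-(ρ * c))) (Λ : ℝ → ℝ)
    {g : ℝ → ℝ} (hg : ∀ δ, g δ = c + z * δ + (θp - θ0)) :
    sSup (Set.range fun δ => Λ δ * (-Real.exp (-(ρ * g δ)) - -E))
      = ρ * E * (z * Ham ρ Λ z ((θ0 - θp) / z)) := by
  have hpt : ∀ δ, Λ δ * (-Real.exp (-(ρ * g δ)) - -E)
      = (ρ * E * z) * (Λ δ / (ρ * z) * (1 - Real.exp (-(ρ * z * (δ - (θ0 - θp) / z))))) := by
    intro δ
    have h1 : -(ρ * g δ) = -(ρ * c) + -(ρ * z * (δ - (θ0 - θp) / z)) := by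
      rw [hg]; field_simp; ring
    rw [h1, Real.exp_add, hE]
    have hE0 : (0:ℝ) < Real.exp (-(ρ * c)) := Real.exp_pos _
    field_simp
    ring
  have hEpos : 0 < E := hE ▸ Real.exp_pos _
  simp only [hpt]
  rw [MM.sSup_range_mul (by positivity) _]
  rw [Ham]
  ring

theorem MM.expand_double_sum {m : ℕ} (c : ℝ) (f : Fin m → Fin m → ℝ) :
    c * ∑ i, ∑ j, f i j = ∑ i, ∑ j, c * f i j := by
  rw [Finset.mul_sum]
  exact Finset.sum_congr rfl fun i _ => Finset.mul_sum _ _ _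

end MMAux

/-- **Market-making verification proposition.** If `θ` solves the reduced market-making HJB
with terminal condition `θ(T,q,S) = −qᵀΓq`, then
`w(t,x,q,S) = −exp(−ρ(x + qᵀ𝒥S + θ(t,q,S)))` solves the market maker's HJB equation. -/
theorem market_making_hjb_verification
    (r k N : ℕ) (hr : 0 < r) (hk : 0 < k) (hN : 0 < N)
    (T ρ : ℝ) (hT : 0 < T) (hρ : 0 < ρ)
    (R : Matrix (Fin (r + k)) (Fin (r + k)) ℝ)
    (Sbar : Fin (r + k) → ℝ)
    (Sg : Matrix (Fin (r + k)) (Fin (r + k)) ℝ) (hSg : Sg.PosSemidef)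
    (η : Matrix (Fin r) (Fin r) ℝ) (hη : η.PosDef)
    (Γ : Matrix (Fin r) (Fin r) ℝ) (hΓ : Γ.IsSymm)
    (𝒥 : Matrix (Fin r) (Fin (r + k)) ℝ)
    (h𝒥 : ∀ i j, 𝒥 i j = if (i : ℕ) = (j : ℕ) then 1 else 0)
    -- request-size distributions: probability measures supported on (0,∞)
    (ψb ψa : Fin r → Fin N → Measure ℝ)
    (hψb : ∀ i n, IsProbabilityMeasure (ψb i n)) (hψbsupp : ∀ i n, ψb i n (Iic 0) = 0)
    (hψa : ∀ i n, IsProbabilityMeasure (ψa i n)) (hψasupp : ∀ i n, ψa i n (Iic 0) = 0)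
    -- intensity functions
    (Λb Λa : Fin r → Fin N → ℝ → ℝ)
    (hΛbpos : ∀ i n δ, 0 < Λb i n δ) (hΛapos : ∀ i n δ, 0 < Λa i n δ)
    (hΛbC2 : ∀ i n, ContDiff ℝ 2 (Λb i n)) (hΛaC2 : ∀ i n, ContDiff ℝ 2 (Λa i n))
    (hΛbdec : ∀ i n, StrictAnti (Λb i n)) (hΛadec : ∀ i n, StrictAnti (Λa i n))
    (hΛblim : ∀ i n, Filter.Tendsto (Λb i n) Filter.atTop (nhds 0))
    (hΛalim : ∀ i n, Filter.Tendsto (Λa i n) Filter.atTop (nhds 0))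
    (hΛbsup : ∀ i n, ∃ c : ℝ, c < 2 ∧ ∀ δ,
      Λb i n δ * deriv (deriv (Λb i n)) δ / (deriv (Λb i n) δ) ^ 2 ≤ c)
    (hΛasup : ∀ i n, ∃ c : ℝ, c < 2 ∧ ∀ δ,
      Λa i n δ * deriv (deriv (Λa i n)) δ / (deriv (Λa i n) δ) ^ 2 ≤ c)
    -- `θ` is C¹ in `t` and `q`, C² in `S`
    (θ : ℝ → (Fin r → ℝ) → (Fin (r + k) → ℝ) → ℝ)
    (hθt : ∀ (q : Fin r → ℝ) (S : Fin (r + k) → ℝ),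
      ContDiffOn ℝ 1 (fun τ => θ τ q S) (Icc (0:ℝ) T))
    (hθq : ∀ t ∈ Icc (0:ℝ) T, ∀ S : Fin (r + k) → ℝ, ContDiff ℝ 1 (fun q => θ t q S))
    (hθS : ∀ t ∈ Icc (0:ℝ) T, ∀ q : Fin r → ℝ, ContDiff ℝ 2 (fun S => θ t q S))
    -- terminal condition for `θ`
    (hθT : ∀ (q : Fin r → ℝ) (S : Fin (r + k) → ℝ), θ T q S = -(q ⬝ᵥ Γ.mulVec q))
    -- the integrals appearing in the reduced HJB are finite
    (hIntb : ∀ (t : ℝ) (q : Fin r → ℝ) (S : Fin (r + k) → ℝ) (i : Fin r) (n : Fin N),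
      IntegrableOn (fun z : ℝ => z * Ham ρ (Λb i n) z
        ((θ t q S - θ t (q + z • (Pi.single i 1 : Fin r → ℝ)) S) / z)) (Ioi 0) (ψb i n))
    (hInta : ∀ (t : ℝ) (q : Fin r → ℝ) (S : Fin (r + k) → ℝ) (i : Fin r) (n : Fin N),
      IntegrableOn (fun z : ℝ => z * Ham ρ (Λa i n) z
        ((θ t q S - θ t (q - z • (Pi.single i 1 : Fin r → ℝ)) S) / z)) (Ioi 0) (ψa i n))
    -- `θ` solves the reduced HJB equation on `[0,T)`
    (hθpde : ∀ t ∈ Ico (0:ℝ) T, ∀ (q : Fin r → ℝ) (S : Fin (r + k) → ℝ),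
      0 = ptTheta T θ t q S
        + (Sbar - S) ⬝ᵥ Rᵀ.mulVec (𝒥ᵀ.mulVec q + gradSTheta θ t q S)
        + (1/2 : ℝ) * (Sg * hessSTheta θ t q S).trace
        - (ρ / 2) * ((𝒥ᵀ.mulVec q + gradSTheta θ t q S) ⬝ᵥ
            Sg.mulVec (𝒥ᵀ.mulVec q + gradSTheta θ t q S))
        + sSup (Set.range fun v : Fin r → ℝ =>
            v ⬝ᵥ gradQTheta θ t q S - v ⬝ᵥ η.mulVec v)
        + ∑ i : Fin r, ∑ n : Fin N, ∫ z in Ioi (0:ℝ),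
            z * Ham ρ (Λb i n) z ((θ t q S - θ t (q + z • (Pi.single i 1 : Fin r → ℝ)) S) / z) ∂ψb i n
        + ∑ i : Fin r, ∑ n : Fin N, ∫ z in Ioi (0:ℝ),
            z * Ham ρ (Λa i n) z ((θ t q S - θ t (q - z • (Pi.single i 1 : Fin r → ℝ)) S) / z) ∂ψa i n)
    -- the integrals appearing in the market maker's HJB are finite
    (hIntWb : ∀ (t x : ℝ) (q : Fin r → ℝ) (S : Fin (r + k) → ℝ) (i : Fin r) (n : Fin N),
      IntegrableOn (fun z : ℝ => sSup (Set.range fun δ : ℝ => Λb i n δ *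
        (-Real.exp (-(ρ * ((x - z * (S (Fin.castAdd k i) - δ))
            + (q + z • (Pi.single i 1 : Fin r → ℝ)) ⬝ᵥ 𝒥.mulVec S + θ t (q + z • (Pi.single i 1 : Fin r → ℝ)) S)))
          - -Real.exp (-(ρ * (x + q ⬝ᵥ 𝒥.mulVec S + θ t q S)))))) (Ioi 0) (ψb i n))
    (hIntWa : ∀ (t x : ℝ) (q : Fin r → ℝ) (S : Fin (r + k) → ℝ) (i : Fin r) (n : Fin N),
      IntegrableOn (fun z : ℝ => sSup (Set.range fun δ : ℝ => Λa i n δ *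
        (-Real.exp (-(ρ * ((x + z * (S (Fin.castAdd k i) + δ))
            + (q - z • (Pi.single i 1 : Fin r → ℝ)) ⬝ᵥ 𝒥.mulVec S + θ t (q - z • (Pi.single i 1 : Fin r → ℝ)) S)))
          - -Real.exp (-(ρ * (x + q ⬝ᵥ 𝒥.mulVec S + θ t q S)))))) (Ioi 0) (ψa i n)) :
    -- `w(t,x,q,S) = −exp(−ρ(x + qᵀ𝒥S + θ(t,q,S)))` solves the market maker's HJB on `[0,T)` …
    (∀ t ∈ Ico (0:ℝ) T, ∀ (x : ℝ) (q : Fin r → ℝ) (S : Fin (r + k) → ℝ),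
      0 = ptW T (fun t x q S => -Real.exp (-(ρ * (x + q ⬝ᵥ 𝒥.mulVec S + θ t q S)))) t x q S
        + (Sbar - S) ⬝ᵥ Rᵀ.mulVec
            (gradSW (fun t x q S => -Real.exp (-(ρ * (x + q ⬝ᵥ 𝒥.mulVec S + θ t q S)))) t x q S)
        + (1/2 : ℝ) * (Sg * hessSW
            (fun t x q S => -Real.exp (-(ρ * (x + q ⬝ᵥ 𝒥.mulVec S + θ t q S)))) t x q S).trace
        + sSup (Set.range fun v : Fin r → ℝ =>
            v ⬝ᵥ gradQW (fun t x q S =>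
                -Real.exp (-(ρ * (x + q ⬝ᵥ 𝒥.mulVec S + θ t q S)))) t x q S
              - (v ⬝ᵥ 𝒥.mulVec S + v ⬝ᵥ η.mulVec v) *
                  pxW (fun t x q S =>
                    -Real.exp (-(ρ * (x + q ⬝ᵥ 𝒥.mulVec S + θ t q S)))) t x q S)
        + ∑ i : Fin r, ∑ n : Fin N, ∫ z in Ioi (0:ℝ),
            sSup (Set.range fun δ : ℝ => Λb i n δ *
              (-Real.exp (-(ρ * ((x - z * (S (Fin.castAdd k i) - δ))
                  + (q + z • (Pi.single i 1 : Fin r → ℝ)) ⬝ᵥ 𝒥.mulVec S + θ t (q + z • (Pi.single i 1 : Fin r → ℝ)) S)))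
                - -Real.exp (-(ρ * (x + q ⬝ᵥ 𝒥.mulVec S + θ t q S))))) ∂ψb i n
        + ∑ i : Fin r, ∑ n : Fin N, ∫ z in Ioi (0:ℝ),
            sSup (Set.range fun δ : ℝ => Λa i n δ *
              (-Real.exp (-(ρ * ((x + z * (S (Fin.castAdd k i) + δ))
                  + (q - z • (Pi.single i 1 : Fin r → ℝ)) ⬝ᵥ 𝒥.mulVec S + θ t (q - z • (Pi.single i 1 : Fin r → ℝ)) S)))
                - -Real.exp (-(ρ * (x + q ⬝ᵥ 𝒥.mulVec S + θ t q S))))) ∂ψa i n) ∧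
    -- … with the correct terminal condition
    (∀ (x : ℝ) (q : Fin r → ℝ) (S : Fin (r + k) → ℝ),
      -Real.exp (-(ρ * (x + q ⬝ᵥ 𝒥.mulVec S + θ T q S)))
        = -Real.exp (-(ρ * (x + q ⬝ᵥ 𝒥.mulVec S - q ⬝ᵥ Γ.mulVec q)))) := by
  constructor
  · intro t ht x q S
    obtain ⟨ht0, htT⟩ := ht
    have htmem : t ∈ Icc (0:ℝ) T := ⟨ht0, htT.le⟩
    set w : ℝ → ℝ → (Fin r → ℝ) → (Fin (r + k) → ℝ) → ℝ :=
      fun t x q S => -Real.exp (-(ρ * (x + q ⬝ᵥ 𝒥.mulVec S + θ t q S))) with hw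
    set E : ℝ := Real.exp (-(ρ * (x + q ⬝ᵥ 𝒥.mulVec S + θ t q S))) with hE
    have hEpos : 0 < E := by rw [hE]; exact Real.exp_pos _
    -- the matrix 𝒥 picks out the first r coordinates
    have hJ : ∀ i : Fin r, 𝒥.mulVec S i = S (Fin.castAdd k i) := by
      intro i
      show (fun j => 𝒥 i j) ⬝ᵥ S = S (Fin.castAdd k i)
      rw [dotProduct, Finset.sum_eq_single (Fin.castAdd k i)]
      · rw [h𝒥]; simp
      · intro j _ hj
        rw [h𝒥]
        have hne : (i : ℕ) ≠ (j : ℕ) := by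
          intro hc
          exact hj (by apply Fin.ext; simp [← hc])
        simp [hne]
      · intro h; exact absurd (Finset.mem_univ _) h
    have hdotJ : ∀ v : Fin (r + k) → ℝ, q ⬝ᵥ 𝒥.mulVec v = v ⬝ᵥ 𝒥ᵀ.mulVec q := by
      intro v
      rw [Matrix.dotProduct_mulVec, dotProduct_comm, ← Matrix.mulVec_transpose]
    -- differentiability of θ
    have hθSd : Differentiable ℝ (fun S' => θ t q S') := (hθS t htmem q).differentiable (by norm_num)
    have hθqd : Differentiable ℝ (fun q' => θ t q' S) := (hθq t htmem S).differentiable (by norm_num)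
    -- time derivative
    have hptW : ptW T w t x q S = ρ * E * ptTheta T θ t q S := by
      have hud : UniqueDiffWithinAt ℝ (Icc (0:ℝ) T) t := (uniqueDiffOn_Icc hT) t htmem
      have hg : HasDerivWithinAt (fun τ => θ τ q S) (ptTheta T θ t q S) (Icc (0:ℝ) T) t :=
        (((hθt q S).differentiableOn (by norm_num)) t htmem).hasDerivWithinAt
      have h1 : HasDerivWithinAt (fun τ => -(ρ * (x + q ⬝ᵥ 𝒥.mulVec S + θ τ q S)))
          (-(ρ * ptTheta T θ t q S)) (Icc (0:ℝ) T) t :=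
        ((hg.const_add (x + q ⬝ᵥ 𝒥.mulVec S)).const_mul ρ).neg
      have h3 := (h1.exp).fun_neg
      rw [ptW, hw, h3.derivWithin hud, ← hE]
      ring
    -- cash derivative
    have hpxW : pxW w t x q S = ρ * E := by
      have hu : HasDerivAt (fun ξ : ℝ => ξ + q ⬝ᵥ 𝒥.mulVec S + θ t q S) 1 x := by
        simpa using ((hasDerivAt_id x).add_const (q ⬝ᵥ 𝒥.mulVec S)).add_const (θ t q S)
      have h2 := MM.hasDerivAt_negexp (ρ := ρ) hu
      simp only [mul_one] at h2
      rw [← hE] at h2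
      rw [pxW, hw]
      exact h2.deriv
    -- gradient in q
    have hgradQW : ∀ i, gradQW w t x q S i = ρ * E * (𝒥.mulVec S i + gradQTheta θ t q S i) := by
      intro i
      have hθi : HasDerivAt (fun s => θ t (Function.update q i s) S)
          (gradQTheta θ t q S i) (q i) := by
        rw [show gradQTheta θ t q S i = fderiv ℝ (fun q' => θ t q' S) q (Pi.single i 1) from
          MM.deriv_comp_update (hθqd q)]
        exact MM.hasDerivAt_comp_update (hθqd q)
      have hu : HasDerivAt
          (fun s => x + Function.update q i s ⬝ᵥ 𝒥.mulVec S + θ t (Function.update q i s) S)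
          (𝒥.mulVec S i + gradQTheta θ t q S i) (q i) := by
        simpa using ((MM.hasDerivAt_update_dotProduct q (𝒥.mulVec S) i).const_add x).fun_add hθi
      have h2 := MM.hasDerivAt_negexp (ρ := ρ) hu
      simp only [Function.update_eq_self] at h2
      rw [← hE] at h2
      rw [gradQW, hw]
      exact h2.deriv
    -- gradient in S (at an arbitrary point S')
    have hθSj : ∀ (S' : Fin (r + k) → ℝ) (j : Fin (r + k)),
        HasDerivAt (fun s => θ t q (Function.update S' j s)) (gradSTheta θ t q S' j) (S' j) := by
      intro S' j
      rw [show gradSTheta θ t q S' j = fderiv ℝ (fun S'' => θ t q S'') S' (Pi.single j 1) from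
        MM.deriv_comp_update (hθSd S')]
      exact MM.hasDerivAt_comp_update (hθSd S')
    have huS : ∀ (S' : Fin (r + k) → ℝ) (j : Fin (r + k)),
        HasDerivAt (fun s => x + q ⬝ᵥ 𝒥.mulVec (Function.update S' j s)
            + θ t q (Function.update S' j s))
          (𝒥ᵀ.mulVec q j + gradSTheta θ t q S' j) (S' j) := by
      intro S' j
      have hrw : ∀ s : ℝ, x + q ⬝ᵥ 𝒥.mulVec (Function.update S' j s)
          + θ t q (Function.update S' j s)
          = x + Function.update S' j s ⬝ᵥ 𝒥ᵀ.mulVec q + θ t q (Function.update S' j s) := by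
        intro s; rw [hdotJ]
      simp only [hrw]
      simpa using ((MM.hasDerivAt_update_dotProduct S' (𝒥ᵀ.mulVec q) j).const_add x).fun_add (hθSj S' j)
    have hgradSW : ∀ (S' : Fin (r + k) → ℝ) (j : Fin (r + k)),
        gradSW w t x q S' j
          = ρ * Real.exp (-(ρ * (x + q ⬝ᵥ 𝒥.mulVec S' + θ t q S')))
              * (𝒥ᵀ.mulVec q j + gradSTheta θ t q S' j) := by
      intro S' j
      have h2 := MM.hasDerivAt_negexp (ρ := ρ) (huS S' j)
      simp only [Function.update_eq_self] at h2
      rw [gradSW, hw]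
      exact h2.deriv
    -- Hessian in S
    have hhessSW : ∀ i j, hessSW w t x q S i j
        = ρ * E * (hessSTheta θ t q S i j
            - ρ * (𝒥ᵀ.mulVec q i + gradSTheta θ t q S i)
                * (𝒥ᵀ.mulVec q j + gradSTheta θ t q S j)) := by
      intro i j
      have heqfun : (fun s => gradSW w t x q (Function.update S j s) i)
          = fun s => ρ * Real.exp (-(ρ * (x + q ⬝ᵥ 𝒥.mulVec (Function.update S j s)
              + θ t q (Function.update S j s))))
              * (𝒥ᵀ.mulVec q i + gradSTheta θ t q (Function.update S j s) i) :=
        funext fun s => hgradSW _ i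
      have hexp : HasDerivAt (fun s => Real.exp (-(ρ * (x + q ⬝ᵥ 𝒥.mulVec (Function.update S j s)
              + θ t q (Function.update S j s)))))
          (E * -(ρ * (𝒥ᵀ.mulVec q j + gradSTheta θ t q S j))) (S j) := by
        have h := (((huS S j).const_mul ρ).fun_neg).exp
        simp only [Function.update_eq_self] at h
        rw [← hE] at h
        exact h
      have hG : HasDerivAt (fun s => gradSTheta θ t q (Function.update S j s) i)
          (hessSTheta θ t q S i j) (S j) := by
        have hgd : Differentiable ℝ (fun S'' : Fin (r + k) → ℝ => gradSTheta θ t q S'' i) :=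
          MM.differentiable_gradS (f := fun S'' => θ t q S'') (hθS t htmem q) i
        have hdiffG : DifferentiableAt ℝ (fun s => gradSTheta θ t q (Function.update S j s) i)
            (S j) :=
          (hgd (Function.update S j (S j))).comp (S j)
            (hasDerivAt_update S j (S j)).differentiableAt
        exact hdiffG.hasDerivAt
      have hprod := (hexp.const_mul ρ).fun_mul (hG.const_add (𝒥ᵀ.mulVec q i))
      simp only [Function.update_eq_self] at hprod
      have hprod' : HasDerivAt (fun s => ρ * Real.exp (-(ρ * (x + q ⬝ᵥ 𝒥.mulVec (Function.update S j s)
              + θ t q (Function.update S j s))))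
              * (𝒥ᵀ.mulVec q i + gradSTheta θ t q (Function.update S j s) i))
          (ρ * E * (hessSTheta θ t q S i j
            - ρ * (𝒥ᵀ.mulVec q i + gradSTheta θ t q S i)
                * (𝒥ᵀ.mulVec q j + gradSTheta θ t q S j))) (S j) := by
        refine hprod.congr_deriv ?_
        rw [hE]
        ring
      rw [hessSW, heqfun]
      exact hprod'.deriv
    -- the drift term
    have hdot : (Sbar - S) ⬝ᵥ Rᵀ.mulVec (gradSW w t x q S)
        = ρ * E * ((Sbar - S) ⬝ᵥ Rᵀ.mulVec (𝒥ᵀ.mulVec q + gradSTheta θ t q S)) := by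
      have hfun : gradSW w t x q S = (ρ * E) • (𝒥ᵀ.mulVec q + gradSTheta θ t q S) := by
        funext j
        rw [hgradSW S j, ← hE]
        simp [smul_eq_mul]
      rw [hfun, Matrix.mulVec_smul, dotProduct_smul, smul_eq_mul]
    -- the trace term
    have htrace : (1/2 : ℝ) * (Sg * hessSW w t x q S).trace
        = ρ * E * ((1/2 : ℝ) * (Sg * hessSTheta θ t q S).trace
            - (ρ / 2) * ((𝒥ᵀ.mulVec q + gradSTheta θ t q S) ⬝ᵥ
                Sg.mulVec (𝒥ᵀ.mulVec q + gradSTheta θ t q S))) := by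
      have h1 : (Sg * hessSW w t x q S).trace = ∑ i, ∑ j, Sg i j * hessSW w t x q S j i := by
        simp [Matrix.trace, Matrix.mul_apply, Matrix.diag]
      have h2 : (Sg * hessSTheta θ t q S).trace
          = ∑ i, ∑ j, Sg i j * hessSTheta θ t q S j i := by
        simp [Matrix.trace, Matrix.mul_apply, Matrix.diag]
      have h3 : ((𝒥ᵀ.mulVec q + gradSTheta θ t q S) ⬝ᵥ
            Sg.mulVec (𝒥ᵀ.mulVec q + gradSTheta θ t q S))
          = ∑ i, ∑ j, (𝒥ᵀ.mulVec q i + gradSTheta θ t q S i)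
              * (Sg i j * (𝒥ᵀ.mulVec q j + gradSTheta θ t q S j)) := by
        simp [dotProduct, Matrix.mulVec, Finset.mul_sum]
      rw [h1, h2, h3]
      simp only [hhessSW]
      simp only [Finset.mul_sum, mul_sub]
      rw [← Finset.sum_sub_distrib]
      refine Finset.sum_congr rfl fun i _ => ?_
      rw [← Finset.sum_sub_distrib]
      refine Finset.sum_congr rfl fun j _ => ?_
      ring
    -- the sup-over-v term
    have hsupv : sSup (Set.range fun v : Fin r → ℝ =>
          v ⬝ᵥ gradQW w t x q S - (v ⬝ᵥ 𝒥.mulVec S + v ⬝ᵥ η.mulVec v) * pxW w t x q S)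
        = ρ * E * sSup (Set.range fun v : Fin r → ℝ =>
            v ⬝ᵥ gradQTheta θ t q S - v ⬝ᵥ η.mulVec v) := by
      have hterm : ∀ v : Fin r → ℝ,
          v ⬝ᵥ gradQW w t x q S - (v ⬝ᵥ 𝒥.mulVec S + v ⬝ᵥ η.mulVec v) * pxW w t x q S
            = ρ * E * (v ⬝ᵥ gradQTheta θ t q S - v ⬝ᵥ η.mulVec v) := by
        intro v
        have hgw : gradQW w t x q S
            = fun i => ρ * E * (𝒥.mulVec S i + gradQTheta θ t q S i) := funext hgradQW
        rw [hgw, hpxW]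
        show (∑ i, v i * (ρ * E * (𝒥.mulVec S i + gradQTheta θ t q S i)))
            - ((∑ i, v i * 𝒥.mulVec S i) + v ⬝ᵥ η.mulVec v) * (ρ * E)
          = ρ * E * ((∑ i, v i * gradQTheta θ t q S i) - v ⬝ᵥ η.mulVec v)
        have hsum : (∑ i, v i * (ρ * E * (𝒥.mulVec S i + gradQTheta θ t q S i)))
            = ρ * E * (∑ i, v i * 𝒥.mulVec S i)
              + ρ * E * (∑ i, v i * gradQTheta θ t q S i) := by
          rw [Finset.mul_sum, Finset.mul_sum, ← Finset.sum_add_distrib]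
          exact Finset.sum_congr rfl fun i _ => by ring
        rw [hsum]
        ring
      simp only [hterm]
      exact MM.sSup_range_mul (by positivity) _
    -- the bid-side jump term
    have hjumpb : ∀ (i : Fin r) (n : Fin N),
        (∫ z in Ioi (0:ℝ), sSup (Set.range fun δ : ℝ => Λb i n δ *
            (-Real.exp (-(ρ * ((x - z * (S (Fin.castAdd k i) - δ))
                + (q + z • (Pi.single i 1 : Fin r → ℝ)) ⬝ᵥ 𝒥.mulVec S
                + θ t (q + z • (Pi.single i 1 : Fin r → ℝ)) S))) - -E)) ∂ψb i n)
          = ρ * E * ∫ z in Ioi (0:ℝ), z * Ham ρ (Λb i n) z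
              ((θ t q S - θ t (q + z • (Pi.single i 1 : Fin r → ℝ)) S) / z) ∂ψb i n := by
      intro i n
      rw [← integral_const_mul]
      refine setIntegral_congr_fun measurableSet_Ioi fun z hz => ?_
      have hz0 : (0:ℝ) < z := hz
      have hq : (q + z • (Pi.single i 1 : Fin r → ℝ)) ⬝ᵥ 𝒥.mulVec S
          = q ⬝ᵥ 𝒥.mulVec S + z * S (Fin.castAdd k i) := by
        rw [add_dotProduct, smul_dotProduct, single_dotProduct, hJ i]
        simp [smul_eq_mul]
      exact MM.sup_jump (ρ := ρ) (z := z) (E := E) (c := x + q ⬝ᵥ 𝒥.mulVec S + θ t q S)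
        (θ t q S) (θ t (q + z • (Pi.single i 1 : Fin r → ℝ)) S) hρ hz0 hE (Λb i n)
        (g := fun δ => (x - z * (S (Fin.castAdd k i) - δ))
          + (q + z • (Pi.single i 1 : Fin r → ℝ)) ⬝ᵥ 𝒥.mulVec S
          + θ t (q + z • (Pi.single i 1 : Fin r → ℝ)) S)
        (fun δ => by rw [hq]; ring)
    -- the ask-side jump term
    have hjumpa : ∀ (i : Fin r) (n : Fin N),
        (∫ z in Ioi (0:ℝ), sSup (Set.range fun δ : ℝ => Λa i n δ *
            (-Real.exp (-(ρ * ((x + z * (S (Fin.castAdd k i) + δ))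
                + (q - z • (Pi.single i 1 : Fin r → ℝ)) ⬝ᵥ 𝒥.mulVec S
                + θ t (q - z • (Pi.single i 1 : Fin r → ℝ)) S))) - -E)) ∂ψa i n)
          = ρ * E * ∫ z in Ioi (0:ℝ), z * Ham ρ (Λa i n) z
              ((θ t q S - θ t (q - z • (Pi.single i 1 : Fin r → ℝ)) S) / z) ∂ψa i n := by
      intro i n
      rw [← integral_const_mul]
      refine setIntegral_congr_fun measurableSet_Ioi fun z hz => ?_
      have hz0 : (0:ℝ) < z := hz
      have hq : (q - z • (Pi.single i 1 : Fin r → ℝ)) ⬝ᵥ 𝒥.mulVec S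
          = q ⬝ᵥ 𝒥.mulVec S - z * S (Fin.castAdd k i) := by
        rw [sub_dotProduct, smul_dotProduct, single_dotProduct, hJ i]
        simp [smul_eq_mul]
      exact MM.sup_jump (ρ := ρ) (z := z) (E := E) (c := x + q ⬝ᵥ 𝒥.mulVec S + θ t q S)
        (θ t q S) (θ t (q - z • (Pi.single i 1 : Fin r → ℝ)) S) hρ hz0 hE (Λa i n)
        (g := fun δ => (x + z * (S (Fin.castAdd k i) + δ))
          + (q - z • (Pi.single i 1 : Fin r → ℝ)) ⬝ᵥ 𝒥.mulVec S
          + θ t (q - z • (Pi.single i 1 : Fin r → ℝ)) S)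
        (fun δ => by rw [hq]; ring)
    have hJb : (∑ i : Fin r, ∑ n : Fin N, ∫ z in Ioi (0:ℝ),
          sSup (Set.range fun δ : ℝ => Λb i n δ *
            (-Real.exp (-(ρ * ((x - z * (S (Fin.castAdd k i) - δ))
                + (q + z • (Pi.single i 1 : Fin r → ℝ)) ⬝ᵥ 𝒥.mulVec S
                + θ t (q + z • (Pi.single i 1 : Fin r → ℝ)) S))) - -E)) ∂ψb i n)
        = ρ * E * ∑ i : Fin r, ∑ n : Fin N, ∫ z in Ioi (0:ℝ), z * Ham ρ (Λb i n) z
            ((θ t q S - θ t (q + z • (Pi.single i 1 : Fin r → ℝ)) S) / z) ∂ψb i n := by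
      rw [Finset.mul_sum]
      refine Finset.sum_congr rfl fun i _ => ?_
      rw [Finset.mul_sum]
      exact Finset.sum_congr rfl fun n _ => hjumpb i n
    have hJa : (∑ i : Fin r, ∑ n : Fin N, ∫ z in Ioi (0:ℝ),
          sSup (Set.range fun δ : ℝ => Λa i n δ *
            (-Real.exp (-(ρ * ((x + z * (S (Fin.castAdd k i) + δ))
                + (q - z • (Pi.single i 1 : Fin r → ℝ)) ⬝ᵥ 𝒥.mulVec S
                + θ t (q - z • (Pi.single i 1 : Fin r → ℝ)) S))) - -E)) ∂ψa i n)
        = ρ * E * ∑ i : Fin r, ∑ n : Fin N, ∫ z in Ioi (0:ℝ), z * Ham ρ (Λa i n) z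
            ((θ t q S - θ t (q - z • (Pi.single i 1 : Fin r → ℝ)) S) / z) ∂ψa i n := by
      rw [Finset.mul_sum]
      refine Finset.sum_congr rfl fun i _ => ?_
      rw [Finset.mul_sum]
      exact Finset.sum_congr rfl fun n _ => hjumpa i n
    have h0 := hθpde t ⟨ht0, htT⟩ q S
    rw [hptW]
    rw [hdot]
    rw [htrace]
    rw [hsupv]
    rw [hJb]
    rw [hJa]
    linear_combination (ρ * E) * h0
  · intro x q S
    have h : x + q ⬝ᵥ 𝒥.mulVec S + θ T q S = x + q ⬝ᵥ 𝒥.mulVec S - q ⬝ᵥ Γ.mulVec q := by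
      rw [hθT]; ring
    rw [h]
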